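/- arXiv:1402.3562 — 4 statements merged into one kernel-verified Lean document; each statement's English description precedes it below -/
import Mathlib

section
/- Let v : (0,∞) → ℝ be strictly concave with strictly decreasing derivative v', let θ > 0, x > 0, and suppose d ∈ (0,x) satisfies (1+θ)·v'(x) = v'(x - d). Then for any loss z₀ with 0 < z₀ ≤ d, the maximizer over I ∈ [0, z₀] of I ↦ v(x - z₀ + I) - (1+θ)·I·v'(x) is I = 0, and for any loss z₀ with d < z₀ < x, the maximizer is I = z₀ - d. -/
private lemma g_hasDeriv (v v' : ℝ → ℝ) (θ x z₀ t : ℝ)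
    (hderiv : ∀ y ∈ Set.Ioi (0:ℝ), HasDerivAt v (v' y) y)
    (hpos : 0 < x - z₀ + t) :
    HasDerivAt (fun I => v (x - z₀ + I) - (1 + θ) * I * v' x)
      (v' (x - z₀ + t) - (1 + θ) * v' x) t := by
  have h1 : HasDerivAt (fun s : ℝ => x - z₀ + s) 1 t := (hasDerivAt_id t).const_add _
  have h2 : HasDerivAt (fun s => v (x - z₀ + s)) (v' (x - z₀ + t) * 1) t :=
    (hderiv _ hpos).comp t h1
  have h3 : HasDerivAt (fun s : ℝ => (1 + θ) * s * v' x) ((1 + θ) * 1 * v' x) t :=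
    ((hasDerivAt_id t).const_mul (1 + θ)).mul_const (v' x)
  exact (h2.sub h3).congr_deriv (by ring)

theorem deductible_insurance_structure
    (v v' : ℝ → ℝ) (θ x d : ℝ)
    (hθ : 0 < θ) (hx : 0 < x) (hd : d ∈ Set.Ioo (0:ℝ) x)
    (hderiv : ∀ y ∈ Set.Ioi (0:ℝ), HasDerivAt v (v' y) y)
    (hconc : StrictConcaveOn ℝ (Set.Ioi (0:ℝ)) v)
    (hanti : StrictAntiOn v' (Set.Ioi (0:ℝ)))
    (hfoc : (1 + θ) * v' x = v' (x - d)) :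
    (∀ z₀, 0 < z₀ → z₀ ≤ d →
      ∀ I ∈ Set.Icc (0:ℝ) z₀,
        v (x - z₀ + I) - (1 + θ) * I * v' x ≤
          v (x - z₀ + 0) - (1 + θ) * 0 * v' x) ∧
    (∀ z₀, d < z₀ → z₀ < x →
      ∀ I ∈ Set.Icc (0:ℝ) z₀,
        v (x - z₀ + I) - (1 + θ) * I * v' x ≤
          v (x - z₀ + (z₀ - d)) - (1 + θ) * (z₀ - d) * v' x) := by
  obtain ⟨hd0, hdx⟩ := hd
  have hxd : (0:ℝ) < x - d := by linarith
  constructor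
  · intro z₀ hz0 hzd I hI
    set g : ℝ → ℝ := fun I => v (x - z₀ + I) - (1 + θ) * I * v' x with hg
    have hpos : ∀ t ∈ Set.Icc (0:ℝ) z₀, 0 < x - z₀ + t := by
      intro t ht; have := ht.1; linarith
    have hdiff : ∀ t ∈ Set.Icc (0:ℝ) z₀, HasDerivAt g (v' (x - z₀ + t) - (1 + θ) * v' x) t :=
      fun t ht => g_hasDeriv v v' θ x z₀ t hderiv (hpos t ht)
    have hant : AntitoneOn g (Set.Icc 0 z₀) := by
      apply antitoneOn_of_deriv_nonpos (convex_Icc 0 z₀)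
      · exact fun t ht => (hdiff t ht).continuousAt.continuousWithinAt
      · intro t ht
        rw [interior_Icc] at ht
        exact (hdiff t ⟨ht.1.le, ht.2.le⟩).differentiableAt.differentiableWithinAt
      · intro t ht
        rw [interior_Icc] at ht
        rw [(hdiff t ⟨ht.1.le, ht.2.le⟩).deriv]
        have h1 : v' (x - z₀ + t) < v' (x - d) := by
          apply hanti hxd (hpos t ⟨ht.1.le, ht.2.le⟩)
          linarith [ht.1]
        rw [← hfoc] at h1
        linarith
    have h0 : (0:ℝ) ∈ Set.Icc (0:ℝ) z₀ := ⟨le_rfl, hz0.le⟩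
    exact hant h0 hI hI.1
  · intro z₀ hdz hzx I hI
    set m := z₀ - d with hm
    have hm0 : 0 < m := by linarith
    have hmz : m < z₀ := by linarith
    set g : ℝ → ℝ := fun I => v (x - z₀ + I) - (1 + θ) * I * v' x with hg
    have hpos : ∀ t ∈ Set.Icc (0:ℝ) z₀, 0 < x - z₀ + t := by
      intro t ht; have := ht.1; linarith
    have hdiff : ∀ t ∈ Set.Icc (0:ℝ) z₀, HasDerivAt g (v' (x - z₀ + t) - (1 + θ) * v' x) t :=
      fun t ht => g_hasDeriv v v' θ x z₀ t hderiv (hpos t ht)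
    have hmmem : m ∈ Set.Icc (0:ℝ) z₀ := ⟨hm0.le, hmz.le⟩
    rcases le_total I m with hIm | hIm
    · -- monotone on [0, m]
      have hmono : MonotoneOn g (Set.Icc 0 m) := by
        apply monotoneOn_of_deriv_nonneg (convex_Icc 0 m)
        · exact fun t ht => (hdiff t ⟨ht.1, ht.2.trans hmz.le⟩).continuousAt.continuousWithinAt
        · intro t ht
          rw [interior_Icc] at ht
          exact (hdiff t ⟨ht.1.le, ht.2.le.trans hmz.le⟩).differentiableAt.differentiableWithinAt
        · intro t ht
          rw [interior_Icc] at ht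
          rw [(hdiff t ⟨ht.1.le, ht.2.le.trans hmz.le⟩).deriv]
          have h1 : v' (x - d) < v' (x - z₀ + t) := by
            apply hanti (hpos t ⟨ht.1.le, ht.2.le.trans hmz.le⟩) hxd
            simp only [hm] at ht
            linarith [ht.2]
          rw [← hfoc] at h1
          linarith
      exact hmono ⟨hI.1, hIm⟩ ⟨hm0.le, le_rfl⟩ hIm
    · -- antitone on [m, z₀]
      have hant : AntitoneOn g (Set.Icc m z₀) := by
        apply antitoneOn_of_deriv_nonpos (convex_Icc m z₀)
        · exact fun t ht => (hdiff t ⟨hm0.le.trans ht.1, ht.2⟩).continuousAt.continuousWithinAt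
        · intro t ht
          rw [interior_Icc] at ht
          exact (hdiff t ⟨hm0.le.trans ht.1.le, ht.2.le⟩).differentiableAt.differentiableWithinAt
        · intro t ht
          rw [interior_Icc] at ht
          rw [(hdiff t ⟨hm0.le.trans ht.1.le, ht.2.le⟩).deriv]
          have h1 : v' (x - z₀ + t) < v' (x - d) := by
            apply hanti hxd (hpos t ⟨hm0.le.trans ht.1.le, ht.2.le⟩)
            simp only [hm] at ht
            linarith [ht.1]
          rw [← hfoc] at h1
          linarith
      exact hant ⟨le_rfl, hmz.le⟩ ⟨hIm, hI.2⟩ hIm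
end

section
/- Let η ∈ (0,1), θ > 0 with ν := θ/(1+θ) < η, and let l be uniformly distributed on (0,1). Then E[ln(1 - η·l + (η·l - ν)⁺)] = (1/η - 1)·ln(1+θ) - θ/(η(1+θ)). -/
open MeasureTheory

theorem expected_log_post_insurance (η θ : ℝ)
    (hη : η ∈ Set.Ioo (0:ℝ) 1) (hθ : 0 < θ) (hd : θ / (1 + θ) < η) :
    ∫ l in Set.Ioo (0:ℝ) 1,
        Real.log (1 - η * l + max (η * l - θ / (1 + θ)) 0)
      = (1 / η - 1) * Real.log (1 + θ) - θ / (η * (1 + θ)) := by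
  obtain ⟨hη0, hη1⟩ := hη
  have h1θ : (0:ℝ) < 1 + θ := by linarith
  set ν : ℝ := θ / (1 + θ) with hν
  have hν0 : 0 < ν := div_pos hθ h1θ
  have hν1 : ν < 1 := by rw [hν, div_lt_one h1θ]; linarith
  have h1ν : 1 - ν = 1 / (1 + θ) := by rw [hν]; field_simp; ring
  have hinv : (0:ℝ) < 1 / (1 + θ) := by positivity
  set c : ℝ := ν / η with hc
  have hc0 : 0 < c := div_pos hν0 hη0
  have hc1 : c < 1 := by rw [hc, div_lt_one hη0]; exact hd
  have hηc : η * c = ν := by rw [hc, mul_div_cancel₀ _ hη0.ne']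
  have hfun : ∀ l : ℝ, 1 - η * l + max (η * l - ν) 0
      = max (1 - η * l) (1 / (1 + θ)) := by
    intro l
    rcases le_total (η * l) ν with h | h
    · rw [max_eq_right (by linarith), max_eq_left (by rw [← h1ν]; linarith)]
      ring
    · rw [max_eq_left (by linarith), max_eq_right (by rw [← h1ν]; linarith)]
      rw [← h1ν]; ring
  simp_rw [hfun]
  have hcont : Continuous fun l : ℝ => Real.log (max (1 - η * l) (1 / (1 + θ))) := by
    apply Continuous.log
    · exact (continuous_const.sub (continuous_const.mul continuous_id)).max continuous_const
    · intro x
      exact ne_of_gt (lt_of_lt_of_le hinv (le_max_right _ _))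
  rw [← MeasureTheory.integral_Ioc_eq_integral_Ioo,
    ← intervalIntegral.integral_of_le (by norm_num : (0:ℝ) ≤ 1),
    ← intervalIntegral.integral_add_adjacent_intervals (a := 0) (b := c) (c := 1)
      (hcont.intervalIntegrable _ _) (hcont.intervalIntegrable _ _)]
  have h2 : (∫ l in c..1, Real.log (max (1 - η * l) (1 / (1 + θ))))
      = (1 - c) * Real.log (1 / (1 + θ)) := by
    rw [intervalIntegral.integral_congr (g := fun _ => Real.log (1 / (1 + θ)))
      (by
        intro l hl
        rw [Set.uIcc_of_le hc1.le] at hl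
        have hνl : ν ≤ η * l := by
          have := hl.1
          nlinarith
        simp only
        rw [max_eq_right (by rw [← h1ν]; linarith)])]
    simp
  have h1 : (∫ l in (0:ℝ)..c, Real.log (max (1 - η * l) (1 / (1 + θ))))
      = -(1/η) * ((1 - η * c) * Real.log (1 - η * c) - (1 - η * c))
        - (-(1/η) * ((1 - η * 0) * Real.log (1 - η * 0) - (1 - η * 0))) := by
    rw [intervalIntegral.integral_congr (g := fun l => Real.log (1 - η * l))
      (by
        intro l hl
        rw [Set.uIcc_of_le hc0.le] at hl
        have hlν : η * l ≤ ν := by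
          have := hl.2
          nlinarith
        simp only
        rw [max_eq_left (by rw [← h1ν]; linarith)])]
    apply intervalIntegral.integral_eq_sub_of_hasDerivAt
      (f := fun l => -(1/η) * ((1 - η * l) * Real.log (1 - η * l) - (1 - η * l)))
    · intro l hl
      rw [Set.uIcc_of_le hc0.le] at hl
      have hpos : 0 < 1 - η * l := by
        have hlν : η * l ≤ ν := by nlinarith [hl.2]
        linarith
      have hg : HasDerivAt (fun l : ℝ => 1 - η * l) (-η) l := by
        simpa using ((hasDerivAt_id l).const_mul η).const_sub 1
      have hml := (Real.hasDerivAt_mul_log hpos.ne').comp l hg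
      have hF := ((hml.sub hg).const_mul (-(1/η)))
      refine hF.congr_deriv ?_
      field_simp
      ring
    · apply ContinuousOn.intervalIntegrable
      apply ContinuousOn.log
      · exact (continuous_const.sub (continuous_const.mul continuous_id)).continuousOn
      · intro l hl
        rw [Set.uIcc_of_le hc0.le] at hl
        have hlν : η * l ≤ ν := by nlinarith [hl.2]
        have : 0 < 1 - η * l := by linarith
        exact this.ne'
  rw [h1, h2, hηc, h1ν, one_div ((1:ℝ) + θ), Real.log_inv]
  simp only [mul_zero, sub_zero, one_mul, Real.log_one]
  rw [hc, hν]
  field_simp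
  ring
end

section
/- Let η ∈ (0,1), ν ∈ (0,η), α < 0 with α ≠ -1, and let l be uniformly distributed on (0,1). Then E[(1 - η·l + (η·l - ν)⁺)^α] = (1-ν)^α·(1 - ν/η - (1-ν)/(η(1+α))) + 1/(η(1+α)). -/
open MeasureTheory

theorem expected_power_post_insurance (η ν α : ℝ)
    (hη : η ∈ Set.Ioo (0:ℝ) 1) (hν : ν ∈ Set.Ioo (0:ℝ) η)
    (hα : α < 0) (hα1 : α ≠ -1) :
    ∫ l in Set.Ioo (0:ℝ) 1, (1 - η * l + max (η * l - ν) 0) ^ α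
      = (1 - ν) ^ α * (1 - ν / η - (1 - ν) / (η * (1 + α))) + 1 / (η * (1 + α)) := by
  obtain ⟨hη0, hη1⟩ := hη
  obtain ⟨hν0, hνη⟩ := hν
  have hν1 : ν < 1 := hνη.trans hη1
  have hηne : η ≠ 0 := ne_of_gt hη0
  have h1ν : (0:ℝ) < 1 - ν := by linarith
  set c : ℝ := ν / η with hc
  have hc0 : 0 < c := div_pos hν0 hη0
  have hc1 : c < 1 := (div_lt_one hη0).mpr hνη
  have hηc : η * c = ν := by rw [hc]; field_simp
  -- rewrite integrand as max
  have key : ∀ l : ℝ, 1 - η * l + max (η * l - ν) 0 = max (1 - η * l) (1 - ν) := by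
    intro l
    rcases le_total (η * l) ν with h | h
    · rw [max_eq_right (by linarith), max_eq_left (by linarith)]; ring
    · rw [max_eq_left (by linarith), max_eq_right (by linarith)]; ring
  have cont : Continuous fun l : ℝ => max (1 - η * l) (1 - ν) ^ α := by
    apply Continuous.rpow_const
    · exact (continuous_const.sub (continuous_const.mul continuous_id)).max continuous_const
    · intro x
      left
      have : (1:ℝ) - ν ≤ max (1 - η * x) (1 - ν) := le_max_right _ _
      positivity
  calc ∫ l in Set.Ioo (0:ℝ) 1, (1 - η * l + max (η * l - ν) 0) ^ α
      = ∫ l in (0:ℝ)..1, max (1 - η * l) (1 - ν) ^ α := by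
        rw [intervalIntegral.integral_of_le zero_le_one,
          ← MeasureTheory.integral_Ioc_eq_integral_Ioo]
        exact setIntegral_congr_fun measurableSet_Ioc fun l _ => by rw [key l]
    _ = (∫ l in (0:ℝ)..c, max (1 - η * l) (1 - ν) ^ α)
        + ∫ l in c..1, max (1 - η * l) (1 - ν) ^ α := by
        rw [intervalIntegral.integral_add_adjacent_intervals]
        · exact cont.intervalIntegrable _ _
        · exact cont.intervalIntegrable _ _
    _ = (∫ l in (0:ℝ)..c, (1 - η * l) ^ α) + ∫ l in c..1, (1 - ν) ^ α := by
        congr 1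
        · apply intervalIntegral.integral_congr
          intro l hl
          rw [Set.uIcc_of_le hc0.le] at hl
          have : η * l ≤ ν := by
            calc η * l ≤ η * c := by nlinarith [hl.2]
            _ = ν := hηc
          simp only [max_eq_left (show (1:ℝ)-ν ≤ 1-η*l by linarith)]
        · apply intervalIntegral.integral_congr
          intro l hl
          rw [Set.uIcc_of_le hc1.le] at hl
          have : ν ≤ η * l := by
            calc ν = η * c := hηc.symm
            _ ≤ η * l := by nlinarith [hl.1]
          simp only [max_eq_right (show (1:ℝ)-η*l ≤ 1-ν by linarith)]
    _ = (1 - ν) ^ α * (1 - ν / η - (1 - ν) / (η * (1 + α))) + 1 / (η * (1 + α)) := by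
        have h1 : (∫ l in (0:ℝ)..c, (1 - η * l) ^ α)
            = η⁻¹ * ((1 - (1 - ν) ^ (α + 1)) / (α + 1)) := by
          have := intervalIntegral.integral_comp_sub_mul
            (fun x : ℝ => x ^ α) hηne 1 (a := 0) (b := c)
          rw [this]
          rw [mul_zero, sub_zero, hηc]
          rw [integral_rpow (Or.inr ⟨hα1, by
            rw [Set.uIcc_of_le (by linarith : (1:ℝ) - ν ≤ 1)]
            intro h
            exact absurd h.1 (by linarith)⟩)]
          rw [Real.one_rpow, smul_eq_mul]
        have h2 : (∫ l in c..1, ((1:ℝ) - ν) ^ α) = (1 - c) * (1 - ν) ^ α := by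
          rw [intervalIntegral.integral_const, smul_eq_mul]
        rw [h1, h2]
        have hpow : (1 - ν) ^ (α + 1) = (1 - ν) ^ α * (1 - ν) :=
          Real.rpow_add_one (ne_of_gt h1ν) α
        have hα1' : α + 1 ≠ 0 := by intro h; apply hα1; linarith
        have hne : η * (1 + α) ≠ 0 := by
          intro h
          rcases mul_eq_zero.mp h with h | h
          · exact hηne h
          · exact hα1' (by linarith)
        rw [hpow, hc]
        field_simp [hne, show (1:ℝ) + α ≠ 0 by intro h; apply hα1; linarith]
        ring
end

section
/- Let η ∈ (0,1), θ > 0, and suppose η·l > θ/(1+θ) for a constant l ∈ (0,1). Then -ln(1+θ) - η·l·(1+θ) + θ - ln(1 - η·l) > 0. -/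
theorem insurance_gain_positive_log (η θ l : ℝ)
    (hη : η ∈ Set.Ioo (0:ℝ) 1) (hθ : 0 < θ) (hl : l ∈ Set.Ioo (0:ℝ) 1)
    (hbuy : θ / (1 + θ) < η * l) :
    0 < -Real.log (1 + θ) - η * l * (1 + θ) + θ - Real.log (1 - η * l) := by
  obtain ⟨hη0, hη1⟩ := hη
  obtain ⟨hl0, hl1⟩ := hl
  have hx1 : η * l < 1 := by nlinarith
  have h1θ : (0:ℝ) < 1 + θ := by linarith
  have hg0 : 0 < (1 + θ) * (1 - η * l) := by nlinarith
  have hg1 : (1 + θ) * (1 - η * l) < 1 := by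
    have := (div_lt_iff₀ h1θ).mp hbuy
    nlinarith
  have hlog : Real.log ((1 + θ) * (1 - η * l)) < (1 + θ) * (1 - η * l) - 1 :=
    Real.log_lt_sub_one_of_pos hg0 (by linarith)
  rw [Real.log_mul (by linarith) (by linarith)] at hlog
  nlinarith [hlog]
end
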